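/- Over the frame (ℕ,<), let α be a monotone hybrid formula in MHL(□,@) (built from atomic propositions, nominals, ⊤, ⊥, ∧, ∨, □, @ over nominals; no negation, no ◇, no ↓). Define an occurrence of a nominal in α to be 'bound by □' if it lies inside a subformula □β with no @-operator between that □ and the occurrence. Let α' be obtained from α by replacing every occurrence of a nominal that is bound by □ with ⊥. Then for every valuation η : NOM → ℕ and every k ∈ ℕ, if η,k ⊨ α then η,k ⊨ α'. -/
import Mathlib


/-- Formulas of monotone hybrid logic MHL(□,@) with atomic propositions and nominals. -/
inductive HForm : Type
  | prop : ℕ → HForm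
  | nom : ℕ → HForm
  | top : HForm
  | bot : HForm
  | conj : HForm → HForm → HForm
  | disj : HForm → HForm → HForm
  | box : HForm → HForm
  | at_ : ℕ → HForm → HForm

/-- Satisfaction over the frame (ℕ,<) with nominal valuation η. Atomic propositions
are evaluated by the true-everywhere convention. -/
def sat (η : ℕ → ℕ) (k : ℕ) : HForm → Prop
  | .prop _ => True
  | .nom i => η i = k
  | .top => True
  | .bot => False
  | .conj a b => sat η k a ∧ sat η k b
  | .disj a b => sat η k a ∨ sat η k b
  | .box a => ∀ k' > k, sat η k' a
  | .at_ i a => sat η (η i) a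

mutual
/-- α' : replace every occurrence of a nominal that is bound by □ (i.e. lies inside a
subformula □β with no @ between that □ and the occurrence) with ⊥. -/
def prime : HForm → HForm
  | .prop p => .prop p
  | .nom i => .nom i
  | .top => .top
  | .bot => .bot
  | .conj a b => .conj (prime a) (prime b)
  | .disj a b => .disj (prime a) (prime b)
  | .box a => .box (killNom a)
  | .at_ i a => .at_ i (prime a)

/-- Replace nominal occurrences that are under a □ with no shielding @ by ⊥. -/
def killNom : HForm → HForm
  | .prop p => .prop p
  | .nom _ => .bot
  | .top => .top
  | .bot => .bot
  | .conj a b => .conj (killNom a) (killNom b)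
  | .disj a b => .disj (killNom a) (killNom b)
  | .box a => .box (killNom a)
  | .at_ i a => .at_ i (prime a)
end

/-- every formula is eventually constant in k -/
theorem evConst (a : HForm) (η : ℕ → ℕ) :
    ∃ N, (∀ m ≥ N, sat η m a) ∨ (∀ m ≥ N, ¬ sat η m a) := by
  induction a with
  | prop p => exact ⟨0, Or.inl (fun _ _ => trivial)⟩
  | nom i => exact ⟨η i + 1, Or.inr (fun m hm h => by simp [sat] at h; omega)⟩
  | top => exact ⟨0, Or.inl (fun _ _ => trivial)⟩
  | bot => exact ⟨0, Or.inr (fun _ _ h => h)⟩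
  | conj a b iha ihb =>
    obtain ⟨Na, ha⟩ := iha; obtain ⟨Nb, hb⟩ := ihb
    refine ⟨max Na Nb, ?_⟩
    rcases ha with ha | ha
    · rcases hb with hb | hb
      · exact Or.inl (fun m hm => ⟨ha m (le_trans (le_max_left _ _) hm),
          hb m (le_trans (le_max_right _ _) hm)⟩)
      · exact Or.inr (fun m hm h => hb m (le_trans (le_max_right _ _) hm) h.2)
    · exact Or.inr (fun m hm h => ha m (le_trans (le_max_left _ _) hm) h.1)
  | disj a b iha ihb =>
    obtain ⟨Na, ha⟩ := iha; obtain ⟨Nb, hb⟩ := ihb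
    refine ⟨max Na Nb, ?_⟩
    rcases ha with ha | ha
    · exact Or.inl (fun m hm => Or.inl (ha m (le_trans (le_max_left _ _) hm)))
    · rcases hb with hb | hb
      · exact Or.inl (fun m hm => Or.inr (hb m (le_trans (le_max_right _ _) hm)))
      · exact Or.inr (fun m hm h => h.elim (ha m (le_trans (le_max_left _ _) hm))
          (hb m (le_trans (le_max_right _ _) hm)))
  | box a iha =>
    obtain ⟨N, ha⟩ := iha
    rcases ha with ha | ha
    · exact ⟨N, Or.inl (fun m hm k' hk' => ha k' (le_trans hm (le_of_lt hk')))⟩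
    · exact ⟨0, Or.inr (fun m _ h => ha (max m N + 1) (by omega)
        (h _ (by omega)))⟩
  | at_ i a iha =>
    by_cases h : sat η (η i) a
    · exact ⟨0, Or.inl (fun _ _ => h)⟩
    · exact ⟨0, Or.inr (fun _ _ => h)⟩

mutual
/-- if a holds cofinitely, killNom a holds everywhere -/
theorem killSat : ∀ (a : HForm) (η : ℕ → ℕ) (N : ℕ), (∀ m ≥ N, sat η m a) →
    ∀ k, sat η k (killNom a)
  | .prop _, _, _, _, _ => trivial
  | .nom i, η, N, h, k => by
      have h1 := h N le_rfl; have h2 := h (N+1) (by omega)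
      simp [sat] at h1 h2; omega
  | .top, _, _, _, _ => trivial
  | .bot, _, N, h, _ => h N le_rfl
  | .conj a b, η, N, h, k =>
      ⟨killSat a η N (fun m hm => (h m hm).1) k,
       killSat b η N (fun m hm => (h m hm).2) k⟩
  | .disj a b, η, N, h, k => by
      obtain ⟨Na, ha⟩ := evConst a η
      rcases ha with ha | ha
      · exact Or.inl (killSat a η Na ha k)
      · refine Or.inr (killSat b η (max N Na) (fun m hm => ?_) k)
        exact (h m (le_trans (le_max_left _ _) hm)).resolve_left
          (ha m (le_trans (le_max_right _ _) hm))
  | .box a, η, N, h, k => fun k' _ =>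
      killSat a η (N+1) (fun m hm => h (m-1) (by omega) m (by omega)) k'
  | .at_ i a, η, N, h, k => primeSat a η (η i) (h N le_rfl)

theorem primeSat : ∀ (a : HForm) (η : ℕ → ℕ) (k : ℕ), sat η k a → sat η k (prime a)
  | .prop _, _, _, h => h
  | .nom _, _, _, h => h
  | .top, _, _, h => h
  | .bot, _, _, h => h
  | .conj a b, η, k, h => ⟨primeSat a η k h.1, primeSat b η k h.2⟩
  | .disj a b, η, k, h =>
      h.elim (fun h => Or.inl (primeSat a η k h)) (fun h => Or.inr (primeSat b η k h))
  | .box a, η, k, h => fun k' hk' =>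
      killSat a η (k+1) (fun m hm => h m (by omega)) k'
  | .at_ i a, η, k, h => primeSat a η (η i) h
end

/-- If η,k ⊨ α then η,k ⊨ α', where α' replaces every nominal occurrence bound by □
with ⊥. -/
theorem stmt2 (α : HForm) (η : ℕ → ℕ) (k : ℕ) (h : sat η k α) : sat η k (prime α) := by
  exact primeSat α η k h
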